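/- Universal lower bound for uniform Bernoulli traffic (Theorem 6.1, lower-bound part). Fix n ≥ 1 and 0 < ε < 1, and suppose each arrival entry a_{ij} is Bernoulli with P(a_{ij}=1) = (1−ε)/n (entries independent). Let the schedule be chosen by an arbitrary scheduling policy (any map from states to probability distributions over schedules, independent of the current arrivals). If π is an invariant distribution of the resulting Markov chain with E_π[(∑_{ij} q̄_{ij})²] < ∞, then E_π[∑_{ij} q̄_{ij}] ≥ (1−ε)²(n−1)/(2ε). -/

import Mathlib

open scoped BigOperators ENNReal

namespace SwitchModel

/-- Next queue state: `q⁺_{ij} = max(q_{ij} + a_{ij} − s_{ij}, 0)` (truncated `ℕ` subtraction). -/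
def nextQ (n : ℕ) (q a s : Fin n → Fin n → ℕ) : Fin n → Fin n → ℕ :=
  fun i j => q i j + a i j - s i j

/-- A 0–1 matrix with at most one 1 per row and per column. -/
def IsSchedule (n : ℕ) (s : Fin n → Fin n → ℕ) : Prop :=
  (∀ i j, s i j ≤ 1) ∧ (∀ i, (∑ j, s i j) ≤ 1) ∧ (∀ j, (∑ i, s i j) ≤ 1)

/-- A permutation matrix: exactly one 1 per row and per column. -/
def IsPerm (n : ℕ) (s : Fin n → Fin n → ℕ) : Prop :=
  (∀ i j, s i j ≤ 1) ∧ (∀ i, (∑ j, s i j) = 1) ∧ (∀ j, (∑ i, s i j) = 1)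

/-- MaxWeight selection: `sched q` is a permutation matrix maximizing `∑ q_{ij} s_{ij}`. -/
def IsMaxWeight (n : ℕ) (sched : (Fin n → Fin n → ℕ) → (Fin n → Fin n → ℕ)) : Prop :=
  ∀ q, IsPerm n (sched q) ∧
    ∀ s, IsPerm n s → (∑ i, ∑ j, q i j * s i j) ≤ (∑ i, ∑ j, q i j * sched q i j)

/-- Joint arrival probability: the entries are mutually independent with marginals `A i j`. -/
noncomputable def jointA (n : ℕ) (A : Fin n → Fin n → ℕ → ℝ≥0∞) (a : Fin n → Fin n → ℕ) : ℝ≥0∞ :=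
  ∏ i, ∏ j, A i j (a i j)

/-- `A i j` is a probability distribution on `ℕ` supported on `[0, amax]`,
with mean `lam i j` and variance `(sig i j)^2`. -/
def ArrivalDist (n : ℕ) (A : Fin n → Fin n → ℕ → ℝ≥0∞)
    (lam sig : Fin n → Fin n → ℝ) (amax : ℕ) : Prop :=
  (∀ i j, (∑' k : ℕ, A i j k) = 1) ∧
  (∀ i j k, A i j k ≠ 0 → k ≤ amax) ∧
  (∀ i j, (∑' k : ℕ, (A i j k).toReal * (k : ℝ)) = lam i j) ∧
  (∀ i j, (∑' k : ℕ, (A i j k).toReal * ((k : ℝ) - lam i j) ^ 2) = (sig i j) ^ 2)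

/-- Transition kernel of the switch under a deterministic scheduling map `sched`. -/
noncomputable def kernelMW (n : ℕ) (A : Fin n → Fin n → ℕ → ℝ≥0∞)
    (sched : (Fin n → Fin n → ℕ) → (Fin n → Fin n → ℕ))
    (q q' : Fin n → Fin n → ℕ) : ℝ≥0∞ :=
  ∑' a : Fin n → Fin n → ℕ, jointA n A a * (if nextQ n q a (sched q) = q' then 1 else 0)

/-- Transition kernel of the switch under a randomized scheduling policy `pol`
(the schedule is chosen independently of the current arrivals). -/
noncomputable def kernelPol (n : ℕ) (A : Fin n → Fin n → ℕ → ℝ≥0∞)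
    (pol : (Fin n → Fin n → ℕ) → (Fin n → Fin n → ℕ) → ℝ≥0∞)
    (q q' : Fin n → Fin n → ℕ) : ℝ≥0∞ :=
  ∑' a : Fin n → Fin n → ℕ, ∑' s : Fin n → Fin n → ℕ,
    jointA n A a * pol q s * (if nextQ n q a s = q' then 1 else 0)

/-- `pd` is an invariant (stationary) probability distribution of the kernel `P`. -/
def IsInvariant (n : ℕ)
    (P : (Fin n → Fin n → ℕ) → (Fin n → Fin n → ℕ) → ℝ≥0∞)
    (pd : (Fin n → Fin n → ℕ) → ℝ≥0∞) : Prop :=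
  (∑' q : Fin n → Fin n → ℕ, pd q) = 1 ∧
  ∀ q', (∑' q : Fin n → Fin n → ℕ, pd q * P q q') = pd q'

/-- The face `F`: nonnegative matrices with all row and column sums equal to 1. -/
def memF (n : ℕ) (ν : Fin n → Fin n → ℝ) : Prop :=
  (∀ i j, 0 ≤ ν i j) ∧ (∀ i, (∑ j, ν i j) = 1) ∧ (∀ j, (∑ i, ν i j) = 1)

/-- Steady-state expectation of the total queue length `∑_{ij} q_{ij}`. -/
noncomputable def Etot (n : ℕ) (pd : (Fin n → Fin n → ℕ) → ℝ≥0∞) : ℝ≥0∞ :=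
  ∑' q : Fin n → Fin n → ℕ, pd q * (∑ i, ∑ j, (q i j : ℝ≥0∞))

/-- Steady-state expectation of `(∑_{ij} q_{ij})²`. -/
noncomputable def Etot2 (n : ℕ) (pd : (Fin n → Fin n → ℕ) → ℝ≥0∞) : ℝ≥0∞ :=
  ∑' q : Fin n → Fin n → ℕ, pd q * (∑ i, ∑ j, (q i j : ℝ≥0∞)) ^ 2

/-- Euclidean norm on `ℝ^{n×n}`. -/
noncomputable def normE (n : ℕ) (x : Fin n → Fin n → ℝ) : ℝ :=
  Real.sqrt (∑ i, ∑ j, x i j ^ 2)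

/-- The cone `K = {x : x_{ij} = w_i + w̃_j, w, w̃ ≥ 0}`. -/
def coneK (n : ℕ) : Set (Fin n → Fin n → ℝ) :=
  {x | ∃ w wt : Fin n → ℝ, (∀ i, 0 ≤ w i) ∧ (∀ j, 0 ≤ wt j) ∧ ∀ i j, x i j = w i + wt j}

/-- Embedding of queue states into `ℝ^{n×n}`. -/
def toR (n : ℕ) (q : Fin n → Fin n → ℕ) : Fin n → Fin n → ℝ :=
  fun i j => (q i j : ℝ)

/-- `proj` is the nearest-point projection onto the cone `K`. -/
def IsConeProj (n : ℕ) (proj : (Fin n → Fin n → ℝ) → (Fin n → Fin n → ℝ)) : Prop :=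
  ∀ x, proj x ∈ coneK n ∧ ∀ y ∈ coneK n, normE n (x - proj x) ≤ normE n (x - y)

/-- Bernoulli distribution on `ℕ` with success probability `p`. -/
noncomputable def bern (p : ℝ) : ℕ → ℝ≥0∞ :=
  fun k => if k = 0 then ENNReal.ofReal (1 - p) else if k = 1 then ENNReal.ofReal p else 0

end SwitchModel

namespace SwitchProof
open SwitchModel Finset

def S2 : Finset ℕ := {0, 1}

lemma bern_eq_zero {p : ℝ} {k : ℕ} (hk : k ∉ S2) : bern p k = 0 := by
  have h0 : k ≠ 0 := by rintro rfl; simp [S2] at hk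
  have h1 : k ≠ 1 := by rintro rfl; simp [S2] at hk
  simp [bern, h0, h1]

variable {n : ℕ}

def TF (n : ℕ) : Finset (Fin n → Fin n → ℕ) :=
  Fintype.piFinset fun _ => Fintype.piFinset fun _ => S2

lemma jointA_eq_zero {p : ℝ} {a : Fin n → Fin n → ℕ} (ha : a ∉ TF n) :
    jointA n (fun _ _ => bern p) a = 0 := by
  rw [TF, Fintype.mem_piFinset] at ha
  push_neg at ha
  obtain ⟨i, hi⟩ := ha
  rw [Fintype.mem_piFinset] at hi
  push_neg at hi
  obtain ⟨j, hj⟩ := hi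
  unfold jointA
  exact Finset.prod_eq_zero (Finset.mem_univ i)
    (Finset.prod_eq_zero (Finset.mem_univ j) (bern_eq_zero hj))

lemma tsum_jointA_mul (p : ℝ) (g : (Fin n → Fin n → ℕ) → ℝ≥0∞) :
    ∑' a : Fin n → Fin n → ℕ, jointA n (fun _ _ => bern p) a * g a
      = ∑ a ∈ TF n, jointA n (fun _ _ => bern p) a * g a :=
  tsum_eq_sum fun a ha => by rw [jointA_eq_zero ha, zero_mul]

lemma sum_TF_factor (φ : Fin n → Fin n → ℕ → ℝ≥0∞) :
    ∑ a ∈ TF n, ∏ i, ∏ j, φ i j (a i j) = ∏ i, ∏ j, ∑ k ∈ S2, φ i j k := by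
  rw [TF]
  calc ∑ a ∈ Fintype.piFinset fun _ : Fin n => Fintype.piFinset fun _ : Fin n => S2,
        ∏ i, ∏ j, φ i j (a i j)
      = ∏ i, ∑ v ∈ Fintype.piFinset fun _ : Fin n => S2, ∏ j, φ i j (v j) :=
        (Finset.prod_univ_sum (fun _ : Fin n => Fintype.piFinset fun _ : Fin n => S2) (fun i v => ∏ j, φ i j (v j))).symm
    _ = ∏ i, ∏ j, ∑ k ∈ S2, φ i j k :=
        Finset.prod_congr rfl fun i _ => (Finset.prod_univ_sum _ _).symm

lemma sum_S2_bern {p : ℝ} (h0 : 0 ≤ p) (h1 : p ≤ 1) :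
    ∑ k ∈ S2, bern p k = 1 := by
  rw [S2, Finset.sum_pair (by norm_num : (0:ℕ) ≠ 1)]
  simp only [bern]
  norm_num
  rw [← ENNReal.ofReal_add (by linarith) h0]
  norm_num

lemma sum_S2_bern_mul {p : ℝ} (F : ℕ → ℝ≥0∞) :
    ∑ k ∈ S2, bern p k * F k
      = ENNReal.ofReal (1 - p) * F 0 + ENNReal.ofReal p * F 1 := by
  rw [S2, Finset.sum_pair (by norm_num : (0:ℕ) ≠ 1)]
  simp [bern]

lemma prod_ite_one {α M : Type*} [Fintype α] [DecidableEq α] [CommMonoid M]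
    (i₀ : α) (f : α → M) : (∏ i, if i = i₀ then f i else 1) = f i₀ := by
  rw [Finset.prod_ite_eq' Finset.univ i₀ f]
  simp

lemma rowMoment (p : ℝ) (h0 : 0 ≤ p) (h1 : p ≤ 1) (i₀ : Fin n) (Φ : Fin n → ℕ → ℝ≥0∞) :
    ∑ a ∈ TF n, jointA n (fun _ _ => bern p) a * ∏ j, Φ j (a i₀ j)
      = ∏ j, ∑ k ∈ S2, bern p k * Φ j k := by
  have key : ∀ a : Fin n → Fin n → ℕ,
      jointA n (fun _ _ => bern p) a * ∏ j, Φ j (a i₀ j)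
        = ∏ i, ∏ j, (bern p (a i j) * if i = i₀ then Φ j (a i j) else 1) := by
    intro a
    have : ∀ i : Fin n, (∏ j, (bern p (a i j) * if i = i₀ then Φ j (a i j) else 1))
        = (∏ j, bern p (a i j)) * if i = i₀ then ∏ j, Φ j (a i j) else 1 := by
      intro i
      rw [Finset.prod_mul_distrib]
      congr 1
      split <;> simp
    rw [Finset.prod_congr rfl fun i _ => this i, Finset.prod_mul_distrib,
      prod_ite_one i₀ (fun i => ∏ j, Φ j (a i j))]
    rfl
  rw [Finset.sum_congr rfl fun a _ => key a,
    sum_TF_factor (fun i j k => bern p k * if i = i₀ then Φ j k else 1)]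
  have inner : ∀ i j, (∑ k ∈ S2, (bern p k * if i = i₀ then Φ j k else 1))
      = if i = i₀ then ∑ k ∈ S2, bern p k * Φ j k else 1 := by
    intro i j
    split
    · rfl
    · simp only [mul_one]
      exact sum_S2_bern h0 h1
  rw [Finset.prod_congr rfl fun i _ => Finset.prod_congr rfl fun j _ => inner i j]
  have : ∀ i : Fin n, (∏ j, if i = i₀ then ∑ k ∈ S2, bern p k * Φ j k else 1)
      = if i = i₀ then ∏ j, ∑ k ∈ S2, bern p k * Φ j k else 1 := by
    intro i; split <;> simp
  rw [Finset.prod_congr rfl fun i _ => this i, prod_ite_one i₀]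


lemma prod_ite_two {M : Type*} [CommMonoid M] {j₀ j₁ : Fin n} (hne : j₀ ≠ j₁) (f g : Fin n → M) :
    (∏ j, if j = j₀ then f j else if j = j₁ then g j else 1) = f j₀ * g j₁ := by
  have h := Finset.prod_subset (Finset.subset_univ ({j₀, j₁} : Finset (Fin n)))
    (f := fun j => if j = j₀ then f j else if j = j₁ then g j else 1) ?_
  · rw [← h, Finset.prod_pair hne]
    simp [hne.symm]
  · intro x _ hx
    simp only [Finset.mem_insert, Finset.mem_singleton] at hx
    push_neg at hx
    simp [hx.1, hx.2]

lemma moment0 (p : ℝ) (h0 : 0 ≤ p) (h1 : p ≤ 1) :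
    ∑' a : Fin n → Fin n → ℕ, jointA n (fun _ _ => bern p) a = 1 := by
  have h := tsum_jointA_mul (n := n) p (fun _ => 1)
  simp only [mul_one] at h
  rw [h, show (∑ a ∈ TF n, jointA n (fun _ _ => bern p) a)
      = ∑ a ∈ TF n, ∏ i, ∏ j, bern p (a i j) from rfl,
    sum_TF_factor (fun _ _ k => bern p k)]
  simp [sum_S2_bern h0 h1]

lemma moment1 (p : ℝ) (h0 : 0 ≤ p) (h1 : p ≤ 1) (i : Fin n) :
    ∑' a : Fin n → Fin n → ℕ, jointA n (fun _ _ => bern p) a * ((∑ j, a i j : ℕ) : ℝ≥0∞)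
      = n * ENNReal.ofReal p := by
  rw [tsum_jointA_mul]
  have step : ∀ a : Fin n → Fin n → ℕ,
      jointA n (fun _ _ => bern p) a * ((∑ j, a i j : ℕ) : ℝ≥0∞)
        = ∑ j₀, jointA n (fun _ _ => bern p) a
            * ∏ j, (if j = j₀ then ((a i j : ℕ) : ℝ≥0∞) else 1) := by
    intro a
    rw [Nat.cast_sum, Finset.mul_sum]
    exact Finset.sum_congr rfl fun j₀ _ => by
      rw [prod_ite_one j₀ (fun j => ((a i j : ℕ) : ℝ≥0∞))]
  rw [Finset.sum_congr rfl fun a _ => step a, Finset.sum_comm]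
  rw [Finset.sum_congr rfl fun j₀ _ =>
    rowMoment p h0 h1 i (fun j k => if j = j₀ then (k : ℝ≥0∞) else 1)]
  have e : ∀ j₀ : Fin n,
      (∏ j, ∑ k ∈ S2, bern p k * (if j = j₀ then (k : ℝ≥0∞) else 1)) = ENNReal.ofReal p := by
    intro j₀
    have h2 : ∀ j : Fin n, (∑ k ∈ S2, bern p k * (if j = j₀ then (k : ℝ≥0∞) else 1))
        = if j = j₀ then ENNReal.ofReal p else 1 := by
      intro j
      split
      · rw [sum_S2_bern_mul (fun k => (k : ℝ≥0∞))]; simp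
      · simp only [mul_one]; exact sum_S2_bern h0 h1
    rw [Finset.prod_congr rfl fun j _ => h2 j, prod_ite_one j₀ (fun _ => ENNReal.ofReal p)]
  rw [Finset.sum_congr rfl fun j₀ _ => e j₀]
  simp [Finset.card_univ, nsmul_eq_mul]

lemma sum_S2_bern_k {p : ℝ} : ∑ k ∈ S2, bern p k * (k : ℝ≥0∞) = ENNReal.ofReal p := by
  rw [sum_S2_bern_mul (fun k => (k : ℝ≥0∞))]; simp

lemma sum_S2_bern_k2 {p : ℝ} :
    ∑ k ∈ S2, bern p k * ((k : ℝ≥0∞) * (k : ℝ≥0∞)) = ENNReal.ofReal p := by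
  rw [sum_S2_bern_mul (fun k => (k : ℝ≥0∞) * (k : ℝ≥0∞))]; simp

lemma moment2 (p : ℝ) (h0 : 0 ≤ p) (h1 : p ≤ 1) (i : Fin n) :
    ∑' a : Fin n → Fin n → ℕ, jointA n (fun _ _ => bern p) a * ((∑ j, a i j : ℕ) : ℝ≥0∞) ^ 2
      = n * ENNReal.ofReal p + ((n * (n - 1) : ℕ) : ℝ≥0∞) * ENNReal.ofReal p ^ 2 := by
  rw [tsum_jointA_mul]
  have step : ∀ a : Fin n → Fin n → ℕ,
      jointA n (fun _ _ => bern p) a * ((∑ j, a i j : ℕ) : ℝ≥0∞) ^ 2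
        = ∑ j₀, ∑ j₁, jointA n (fun _ _ => bern p) a
            * ∏ j, ((if j = j₀ then ((a i j : ℕ) : ℝ≥0∞) else 1)
                * (if j = j₁ then ((a i j : ℕ) : ℝ≥0∞) else 1)) := by
    intro a
    have hprod : ∀ j₀ j₁ : Fin n,
        (∏ j, ((if j = j₀ then ((a i j : ℕ) : ℝ≥0∞) else 1)
            * (if j = j₁ then ((a i j : ℕ) : ℝ≥0∞) else 1)))
          = ((a i j₀ : ℕ) : ℝ≥0∞) * ((a i j₁ : ℕ) : ℝ≥0∞) := by
      intro j₀ j₁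
      rw [Finset.prod_mul_distrib, prod_ite_one j₀ (fun j => ((a i j : ℕ) : ℝ≥0∞)),
        prod_ite_one j₁ (fun j => ((a i j : ℕ) : ℝ≥0∞))]
    rw [sq, Nat.cast_sum, Finset.sum_mul_sum, Finset.mul_sum]
    refine Finset.sum_congr rfl fun j₀ _ => ?_
    rw [Finset.mul_sum]
    exact Finset.sum_congr rfl fun j₁ _ => by rw [hprod j₀ j₁]
  rw [Finset.sum_congr rfl fun a _ => step a, Finset.sum_comm]
  rw [Finset.sum_congr rfl fun j₀ _ => Finset.sum_comm]
  have hval : ∀ j₀ j₁ : Fin n,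
      (∑ a ∈ TF n, jointA n (fun _ _ => bern p) a
          * ∏ j, ((if j = j₀ then ((a i j : ℕ) : ℝ≥0∞) else 1)
              * (if j = j₁ then ((a i j : ℕ) : ℝ≥0∞) else 1)))
        = if j₀ = j₁ then ENNReal.ofReal p else ENNReal.ofReal p ^ 2 := by
    intro j₀ j₁
    rw [rowMoment p h0 h1 i (fun j k => (if j = j₀ then (k : ℝ≥0∞) else 1)
        * (if j = j₁ then (k : ℝ≥0∞) else 1))]
    by_cases hd : j₀ = j₁
    · subst hd
      rw [if_pos rfl]
      have h2 : ∀ j : Fin n,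
          (∑ k ∈ S2, bern p k * ((if j = j₀ then (k : ℝ≥0∞) else 1)
              * (if j = j₀ then (k : ℝ≥0∞) else 1)))
          = if j = j₀ then ENNReal.ofReal p else 1 := by
        intro j
        by_cases h : j = j₀
        · simp only [if_pos h, if_pos rfl]
          exact sum_S2_bern_k2
        · simp only [if_neg h, mul_one]
          exact sum_S2_bern h0 h1
      rw [Finset.prod_congr rfl fun j _ => h2 j, prod_ite_one j₀ (fun _ => ENNReal.ofReal p)]
    · rw [if_neg hd]
      have h2 : ∀ j : Fin n,
          (∑ k ∈ S2, bern p k * ((if j = j₀ then (k : ℝ≥0∞) else 1)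
              * (if j = j₁ then (k : ℝ≥0∞) else 1)))
          = if j = j₀ then ENNReal.ofReal p else if j = j₁ then ENNReal.ofReal p else 1 := by
        intro j
        by_cases h : j = j₀
        · have h' : ¬ j = j₁ := fun hc => hd (h ▸ hc ▸ rfl)
          simp only [if_pos h, if_neg h', mul_one]
          exact sum_S2_bern_k
        · simp only [if_neg h, one_mul]
          by_cases h' : j = j₁
          · simp only [if_pos h']
            exact sum_S2_bern_k
          · simp only [if_neg h', mul_one]
            exact sum_S2_bern h0 h1
      rw [Finset.prod_congr rfl fun j _ => h2 j,
        prod_ite_two hd (fun _ => ENNReal.ofReal p) (fun _ => ENNReal.ofReal p), sq]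
  rw [Finset.sum_congr rfl fun j₀ _ => Finset.sum_congr rfl fun j₁ _ => hval j₀ j₁]
  have hin : ∀ j₀ : Fin n,
      (∑ j₁, if j₀ = j₁ then ENNReal.ofReal p else ENNReal.ofReal p ^ 2)
        = ENNReal.ofReal p + ((n - 1 : ℕ) : ℝ≥0∞) * ENNReal.ofReal p ^ 2 := by
    intro j₀
    rw [← Finset.add_sum_erase _ _ (Finset.mem_univ j₀), if_pos rfl]
    congr 1
    rw [Finset.sum_congr rfl fun j₁ hj₁ =>
      if_neg (fun h => (Finset.mem_erase.1 hj₁).1 h.symm)]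
    rw [Finset.sum_const, Finset.card_erase_of_mem (Finset.mem_univ j₀), Finset.card_univ,
      Fintype.card_fin, nsmul_eq_mul]
  rw [Finset.sum_congr rfl fun j₀ _ => hin j₀, Finset.sum_const, Finset.card_univ,
    Fintype.card_fin, nsmul_eq_mul, mul_add, Nat.cast_mul, mul_assoc]


section Chain

variable {n : ℕ} (Ab : Fin n → Fin n → ℕ → ℝ≥0∞)
  (pol : (Fin n → Fin n → ℕ) → (Fin n → Fin n → ℕ) → ℝ≥0∞)
  (pd : (Fin n → Fin n → ℕ) → ℝ≥0∞)

noncomputable def E3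
    (g : (Fin n → Fin n → ℕ) → (Fin n → Fin n → ℕ) → (Fin n → Fin n → ℕ) → ℝ≥0∞) : ℝ≥0∞ :=
  ∑' q : Fin n → Fin n → ℕ, pd q * ∑' a : Fin n → Fin n → ℕ, ∑' s : Fin n → Fin n → ℕ,
    jointA n Ab a * pol q s * g q a s

lemma kernel_apply (q : Fin n → Fin n → ℕ) (f : (Fin n → Fin n → ℕ) → ℝ≥0∞) :
    ∑' q' : Fin n → Fin n → ℕ, kernelPol n Ab pol q q' * f q'
      = ∑' a : Fin n → Fin n → ℕ, ∑' s : Fin n → Fin n → ℕ,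
          jointA n Ab a * pol q s * f (nextQ n q a s) := by
  unfold kernelPol
  calc ∑' q' : Fin n → Fin n → ℕ,
        (∑' a : Fin n → Fin n → ℕ, ∑' s : Fin n → Fin n → ℕ,
          jointA n Ab a * pol q s * (if nextQ n q a s = q' then 1 else 0)) * f q'
      = ∑' (q' : Fin n → Fin n → ℕ) (a : Fin n → Fin n → ℕ) (s : Fin n → Fin n → ℕ),
          jointA n Ab a * pol q s * (if nextQ n q a s = q' then 1 else 0) * f q' := by
        refine tsum_congr fun q' => ?_
        rw [← ENNReal.tsum_mul_right]
        exact tsum_congr fun a => (ENNReal.tsum_mul_right).symm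
    _ = ∑' (a : Fin n → Fin n → ℕ) (q' : Fin n → Fin n → ℕ) (s : Fin n → Fin n → ℕ),
          jointA n Ab a * pol q s * (if nextQ n q a s = q' then 1 else 0) * f q' :=
        ENNReal.tsum_comm
    _ = ∑' (a : Fin n → Fin n → ℕ) (s : Fin n → Fin n → ℕ) (q' : Fin n → Fin n → ℕ),
          jointA n Ab a * pol q s * (if nextQ n q a s = q' then 1 else 0) * f q' :=
        tsum_congr fun a => ENNReal.tsum_comm
    _ = ∑' (a : Fin n → Fin n → ℕ) (s : Fin n → Fin n → ℕ),
          jointA n Ab a * pol q s * f (nextQ n q a s) := by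
        refine tsum_congr fun a => tsum_congr fun s => ?_
        have h : ∀ q' : Fin n → Fin n → ℕ,
            jointA n Ab a * pol q s * (if nextQ n q a s = q' then 1 else 0) * f q'
              = if q' = nextQ n q a s then jointA n Ab a * pol q s * f (nextQ n q a s) else 0 := by
          intro q'
          by_cases h : q' = nextQ n q a s
          · subst h; simp
          · rw [if_neg (fun hc => h hc.symm), if_neg h, mul_zero, zero_mul]
        rw [tsum_congr h, tsum_ite_eq]

lemma E3_station (hpd : IsInvariant n (kernelPol n Ab pol) pd)
    (f : (Fin n → Fin n → ℕ) → ℝ≥0∞) :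
    E3 Ab pol pd (fun q a s => f (nextQ n q a s)) = ∑' q : Fin n → Fin n → ℕ, pd q * f q := by
  unfold E3
  symm
  calc ∑' q' : Fin n → Fin n → ℕ, pd q' * f q'
      = ∑' q' : Fin n → Fin n → ℕ,
          (∑' q : Fin n → Fin n → ℕ, pd q * kernelPol n Ab pol q q') * f q' :=
        tsum_congr fun q' => by rw [hpd.2 q']
    _ = ∑' (q' : Fin n → Fin n → ℕ) (q : Fin n → Fin n → ℕ),
          pd q * kernelPol n Ab pol q q' * f q' :=
        tsum_congr fun q' => (ENNReal.tsum_mul_right).symm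
    _ = ∑' (q : Fin n → Fin n → ℕ) (q' : Fin n → Fin n → ℕ),
          pd q * kernelPol n Ab pol q q' * f q' := ENNReal.tsum_comm
    _ = ∑' q : Fin n → Fin n → ℕ, pd q *
          ∑' q' : Fin n → Fin n → ℕ, kernelPol n Ab pol q q' * f q' := by
        refine tsum_congr fun q => ?_
        rw [← ENNReal.tsum_mul_left]
        exact tsum_congr fun q' => mul_assoc _ _ _
    _ = ∑' q : Fin n → Fin n → ℕ, pd q * ∑' (a : Fin n → Fin n → ℕ) (s : Fin n → Fin n → ℕ),
          jointA n Ab a * pol q s * f (nextQ n q a s) :=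
        tsum_congr fun q => by rw [kernel_apply]

lemma E3_qa (hpol1 : ∀ q, (∑' s : Fin n → Fin n → ℕ, pol q s) = 1)
    (h : (Fin n → Fin n → ℕ) → (Fin n → Fin n → ℕ) → ℝ≥0∞) :
    E3 Ab pol pd (fun q a _ => h q a)
      = ∑' q : Fin n → Fin n → ℕ, pd q * ∑' a : Fin n → Fin n → ℕ, jointA n Ab a * h q a := by
  unfold E3
  refine tsum_congr fun q => ?_
  congr 1
  refine tsum_congr fun a => ?_
  calc ∑' s : Fin n → Fin n → ℕ, jointA n Ab a * pol q s * h q a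
      = ∑' s : Fin n → Fin n → ℕ, jointA n Ab a * h q a * pol q s :=
        tsum_congr fun s => by ring
    _ = jointA n Ab a * h q a * ∑' s : Fin n → Fin n → ℕ, pol q s := ENNReal.tsum_mul_left
    _ = jointA n Ab a * h q a := by rw [hpol1 q, mul_one]

lemma E3_q (hpol1 : ∀ q, (∑' s : Fin n → Fin n → ℕ, pol q s) = 1)
    (hA0 : (∑' a : Fin n → Fin n → ℕ, jointA n Ab a) = 1)
    (f : (Fin n → Fin n → ℕ) → ℝ≥0∞) :
    E3 Ab pol pd (fun q _ _ => f q) = ∑' q : Fin n → Fin n → ℕ, pd q * f q := by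
  rw [E3_qa Ab pol pd hpol1 (fun q _ => f q)]
  refine tsum_congr fun q => ?_
  congr 1
  calc ∑' a : Fin n → Fin n → ℕ, jointA n Ab a * f q
      = (∑' a : Fin n → Fin n → ℕ, jointA n Ab a) * f q := ENNReal.tsum_mul_right
    _ = f q := by rw [hA0, one_mul]

lemma E3_a (hpol1 : ∀ q, (∑' s : Fin n → Fin n → ℕ, pol q s) = 1)
    (hpd1 : (∑' q : Fin n → Fin n → ℕ, pd q) = 1)
    (h : (Fin n → Fin n → ℕ) → ℝ≥0∞) :
    E3 Ab pol pd (fun _ a _ => h a) = ∑' a : Fin n → Fin n → ℕ, jointA n Ab a * h a := by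
  rw [E3_qa Ab pol pd hpol1 (fun _ a => h a)]
  calc ∑' q : Fin n → Fin n → ℕ, pd q * ∑' a : Fin n → Fin n → ℕ, jointA n Ab a * h a
      = (∑' q : Fin n → Fin n → ℕ, pd q) * ∑' a : Fin n → Fin n → ℕ, jointA n Ab a * h a :=
        ENNReal.tsum_mul_right
    _ = _ := by rw [hpd1, one_mul]

lemma E3_prod (hpol1 : ∀ q, (∑' s : Fin n → Fin n → ℕ, pol q s) = 1)
    (f : (Fin n → Fin n → ℕ) → ℝ≥0∞) (h : (Fin n → Fin n → ℕ) → ℝ≥0∞) :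
    E3 Ab pol pd (fun q a _ => f q * h a)
      = (∑' q : Fin n → Fin n → ℕ, pd q * f q)
          * (∑' a : Fin n → Fin n → ℕ, jointA n Ab a * h a) := by
  rw [E3_qa Ab pol pd hpol1 (fun q a => f q * h a)]
  calc ∑' q : Fin n → Fin n → ℕ, pd q * ∑' a : Fin n → Fin n → ℕ, jointA n Ab a * (f q * h a)
      = ∑' q : Fin n → Fin n → ℕ, pd q * (f q * ∑' a : Fin n → Fin n → ℕ, jointA n Ab a * h a) := by
        refine tsum_congr fun q => ?_
        congr 1
        rw [← ENNReal.tsum_mul_left]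
        exact tsum_congr fun a => by ring
    _ = ∑' q : Fin n → Fin n → ℕ, pd q * f q * ∑' a : Fin n → Fin n → ℕ, jointA n Ab a * h a :=
        tsum_congr fun q => (mul_assoc _ _ _).symm
    _ = _ := ENNReal.tsum_mul_right

lemma E3_add (g1 g2 : (Fin n → Fin n → ℕ) → (Fin n → Fin n → ℕ) → (Fin n → Fin n → ℕ) → ℝ≥0∞) :
    E3 Ab pol pd (fun q a s => g1 q a s + g2 q a s)
      = E3 Ab pol pd g1 + E3 Ab pol pd g2 := by
  unfold E3
  rw [← ENNReal.tsum_add]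
  refine tsum_congr fun q => ?_
  rw [← mul_add, ← ENNReal.tsum_add]
  congr 1
  refine tsum_congr fun a => ?_
  rw [← ENNReal.tsum_add]
  exact tsum_congr fun s => by rw [mul_add]

lemma E3_smul (c : ℝ≥0∞)
    (g : (Fin n → Fin n → ℕ) → (Fin n → Fin n → ℕ) → (Fin n → Fin n → ℕ) → ℝ≥0∞) :
    E3 Ab pol pd (fun q a s => c * g q a s) = c * E3 Ab pol pd g := by
  unfold E3
  rw [← ENNReal.tsum_mul_left]
  refine tsum_congr fun q => ?_
  rw [← mul_assoc, mul_comm c (pd q), mul_assoc]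
  congr 1
  rw [← ENNReal.tsum_mul_left]
  refine tsum_congr fun a => ?_
  rw [← ENNReal.tsum_mul_left]
  exact tsum_congr fun s => by ring

lemma E3_mono (hpol2 : ∀ q s, pol q s ≠ 0 → IsSchedule n s)
    (g1 g2 : (Fin n → Fin n → ℕ) → (Fin n → Fin n → ℕ) → (Fin n → Fin n → ℕ) → ℝ≥0∞)
    (h : ∀ q a s, IsSchedule n s → g1 q a s ≤ g2 q a s) :
    E3 Ab pol pd g1 ≤ E3 Ab pol pd g2 := by
  unfold E3
  refine ENNReal.tsum_le_tsum fun q => mul_le_mul_right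
    (ENNReal.tsum_le_tsum fun a => ENNReal.tsum_le_tsum fun s => ?_) _
  by_cases hs : pol q s = 0
  · simp [hs]
  · exact mul_le_mul_right (h q a s (hpol2 q s hs)) _

end Chain

lemma keyIneq (Q A P : ℕ) (h : Q + A ≤ P + 1) :
    Q ^ 2 + 2 * Q * A + A ^ 2 + Q ≤ P ^ 2 + P + 2 * Q + A := by
  have h' : (Q : ℤ) + A ≤ P + 1 := by exact_mod_cast h
  have hQ : (0 : ℤ) ≤ Q := Int.natCast_nonneg _
  have hA : (0 : ℤ) ≤ A := Int.natCast_nonneg _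
  have hP : (0 : ℤ) ≤ P := Int.natCast_nonneg _
  have key : (0 : ℤ) ≤ ((P : ℤ) + 1 - Q - A) * (P + Q + A) :=
    mul_nonneg (by linarith) (by linarith)
  zify
  nlinarith [key]

lemma rowIneq {n : ℕ} (q a s : Fin n → Fin n → ℕ) (hs : IsSchedule n s) (i : Fin n) :
    (∑ j, q i j) ^ 2 + 2 * (∑ j, q i j) * (∑ j, a i j) + (∑ j, a i j) ^ 2 + (∑ j, q i j)
      ≤ (∑ j, nextQ n q a s i j) ^ 2 + (∑ j, nextQ n q a s i j)
          + 2 * (∑ j, q i j) + (∑ j, a i j) := by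
  apply keyIneq
  have h1 : (∑ j, (q i j + a i j)) ≤ ∑ j, (nextQ n q a s i j + s i j) :=
    Finset.sum_le_sum fun j _ => by
      show q i j + a i j ≤ q i j + a i j - s i j + s i j
      exact le_tsub_add
  rw [Finset.sum_add_distrib, Finset.sum_add_distrib] at h1
  have h2 := hs.2.1 i
  omega

lemma nat_le_sq_add_one (m : ℕ) : m ≤ m ^ 2 + 1 := by
  rcases Nat.eq_zero_or_pos m with h | h
  · simp [h]
  · have : m * 1 ≤ m * m := Nat.mul_le_mul_left m h
    calc m = m * 1 := (mul_one m).symm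
      _ ≤ m * m := this
      _ ≤ m ^ 2 + 1 := by rw [sq]; omega

end SwitchProof

open SwitchModel

open SwitchProof

/-- Theorem 6.1, lower-bound part: universal lower bound for uniform
Bernoulli traffic with rate `(1−ε)/n`, under an arbitrary scheduling policy. -/
theorem universal_lower_bound_bernoulli
    (n : ℕ) (hn : 1 ≤ n) (ε : ℝ) (hε0 : 0 < ε) (hε1 : ε < 1)
    (pol : (Fin n → Fin n → ℕ) → (Fin n → Fin n → ℕ) → ℝ≥0∞)
    (hpol1 : ∀ q, (∑' s : Fin n → Fin n → ℕ, pol q s) = 1)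
    (hpol2 : ∀ q s, pol q s ≠ 0 → IsSchedule n s)
    (pd : (Fin n → Fin n → ℕ) → ℝ≥0∞)
    (hpd : IsInvariant n (kernelPol n (fun _ _ => bern ((1 - ε) / n)) pol) pd)
    (hfin : Etot2 n pd ≠ ⊤) :
    ENNReal.ofReal ((1 - ε) ^ 2 * (n - 1) / (2 * ε)) ≤ Etot n pd := by
  classical
  set p : ℝ := (1 - ε) / n with hpdef
  have hnR : (1 : ℝ) ≤ (n : ℝ) := by exact_mod_cast hn
  have hp0 : 0 ≤ p := div_nonneg (by linarith) (by linarith)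
  have hp1 : p ≤ 1 := by rw [hpdef, div_le_one (by linarith)]; linarith
  set Ab : Fin n → Fin n → ℕ → ℝ≥0∞ := fun _ _ => bern p with hAbdef
  have hA0 : (∑' a : Fin n → Fin n → ℕ, jointA n Ab a) = 1 := moment0 p hp0 hp1
  have hpd1 : (∑' q : Fin n → Fin n → ℕ, pd q) = 1 := hpd.1
  set Lm : ℝ≥0∞ := (n : ℝ≥0∞) * ENNReal.ofReal p with hLm
  set Cn : ℝ≥0∞ := ((n * (n - 1) : ℕ) : ℝ≥0∞) * ENNReal.ofReal p ^ 2 with hCn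
  have hLmval : Lm = ENNReal.ofReal (1 - ε) := by
    rw [hLm, ← ENNReal.ofReal_natCast n, ← ENNReal.ofReal_mul (by positivity)]
    congr 1
    rw [hpdef]
    field_simp
  have hLmne : Lm ≠ ⊤ := by rw [hLmval]; exact ENNReal.ofReal_ne_top
  have row : ∀ i : Fin n,
      ENNReal.ofReal (((n * (n - 1) : ℕ) : ℝ) * p ^ 2 / (2 * ε))
        ≤ ∑' q : Fin n → Fin n → ℕ, pd q * ((∑ j, q i j : ℕ) : ℝ≥0∞) := by
    intro i
    set Bv : ℝ≥0∞ := ∑' q : Fin n → Fin n → ℕ, pd q * ((∑ j, q i j : ℕ) : ℝ≥0∞) with hBv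
    set A2v : ℝ≥0∞ :=
      ∑' q : Fin n → Fin n → ℕ, pd q * ((∑ j, q i j : ℕ) : ℝ≥0∞) ^ 2 with hA2v
    have hA2fin : A2v ≠ ⊤ := by
      refine ne_top_of_le_ne_top hfin ?_
      rw [hA2v]
      unfold Etot2
      refine ENNReal.tsum_le_tsum fun q => mul_le_mul_right (pow_le_pow_left' ?_ 2) _
      calc ((∑ j, q i j : ℕ) : ℝ≥0∞) = ∑ j, (q i j : ℝ≥0∞) := Nat.cast_sum _ _
        _ ≤ ∑ i', ∑ j, (q i' j : ℝ≥0∞) :=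
            Finset.single_le_sum (f := fun i' => ∑ j, (q i' j : ℝ≥0∞))
              (fun _ _ => zero_le) (Finset.mem_univ i)
    have hBle : Bv ≤ A2v + 1 := by
      have hpt : ∀ q : Fin n → Fin n → ℕ,
          pd q * ((∑ j, q i j : ℕ) : ℝ≥0∞)
            ≤ pd q * ((∑ j, q i j : ℕ) : ℝ≥0∞) ^ 2 + pd q := by
        intro q
        have hmn : ((∑ j, q i j : ℕ) : ℝ≥0∞) ≤ ((∑ j, q i j : ℕ) : ℝ≥0∞) ^ 2 + 1 := by
          have h := (Nat.cast_le (α := ℝ≥0∞)).2 (nat_le_sq_add_one (∑ j, q i j))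
          simp only [Nat.cast_add, Nat.cast_pow, Nat.cast_one] at h
          exact h
        calc pd q * ((∑ j, q i j : ℕ) : ℝ≥0∞)
            ≤ pd q * (((∑ j, q i j : ℕ) : ℝ≥0∞) ^ 2 + 1) := mul_le_mul_right hmn _
          _ = pd q * ((∑ j, q i j : ℕ) : ℝ≥0∞) ^ 2 + pd q := by rw [mul_add, mul_one]
      calc Bv ≤ ∑' q : Fin n → Fin n → ℕ,
            (pd q * ((∑ j, q i j : ℕ) : ℝ≥0∞) ^ 2 + pd q) := ENNReal.tsum_le_tsum hpt
        _ = A2v + 1 := by rw [ENNReal.tsum_add, hpd1, hA2v]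
    have hBfin : Bv ≠ ⊤ :=
      ne_top_of_le_ne_top (ENNReal.add_ne_top.2 ⟨hA2fin, ENNReal.one_ne_top⟩) hBle
    have hM1 : (∑' a : Fin n → Fin n → ℕ, jointA n Ab a * ((∑ j, a i j : ℕ) : ℝ≥0∞)) = Lm := by
      rw [hLm]; exact moment1 p hp0 hp1 i
    have hM2 : (∑' a : Fin n → Fin n → ℕ, jointA n Ab a * ((∑ j, a i j : ℕ) : ℝ≥0∞) ^ 2)
        = Lm + Cn := by
      rw [hLm, hCn]; exact moment2 p hp0 hp1 i
    have ptw : ∀ q a s : Fin n → Fin n → ℕ, IsSchedule n s →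
        ((((∑ j, q i j : ℕ) : ℝ≥0∞) ^ 2 + ((∑ j, q i j : ℕ) : ℝ≥0∞))
            + (2 * (((∑ j, q i j : ℕ) : ℝ≥0∞) * ((∑ j, a i j : ℕ) : ℝ≥0∞))
                + ((∑ j, a i j : ℕ) : ℝ≥0∞) ^ 2))
          ≤ ((((∑ j, nextQ n q a s i j : ℕ) : ℝ≥0∞) ^ 2
                + ((∑ j, nextQ n q a s i j : ℕ) : ℝ≥0∞))
              + (2 * ((∑ j, q i j : ℕ) : ℝ≥0∞) + ((∑ j, a i j : ℕ) : ℝ≥0∞))) := by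
      intro q a s hs
      have h := rowIneq q a s hs i
      have h' := (Nat.cast_le (α := ℝ≥0∞)).2 h
      simp only [Nat.cast_add, Nat.cast_mul, Nat.cast_pow, Nat.cast_ofNat] at h'
      calc (((∑ j, q i j : ℕ) : ℝ≥0∞) ^ 2 + ((∑ j, q i j : ℕ) : ℝ≥0∞))
            + (2 * (((∑ j, q i j : ℕ) : ℝ≥0∞) * ((∑ j, a i j : ℕ) : ℝ≥0∞))
                + ((∑ j, a i j : ℕ) : ℝ≥0∞) ^ 2)
          = ((∑ j, q i j : ℕ) : ℝ≥0∞) ^ 2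
              + 2 * ((∑ j, q i j : ℕ) : ℝ≥0∞) * ((∑ j, a i j : ℕ) : ℝ≥0∞)
              + ((∑ j, a i j : ℕ) : ℝ≥0∞) ^ 2 + ((∑ j, q i j : ℕ) : ℝ≥0∞) := by ring
        _ ≤ ((∑ j, nextQ n q a s i j : ℕ) : ℝ≥0∞) ^ 2 + ((∑ j, nextQ n q a s i j : ℕ) : ℝ≥0∞)
              + 2 * ((∑ j, q i j : ℕ) : ℝ≥0∞) + ((∑ j, a i j : ℕ) : ℝ≥0∞) := h'
        _ = (((∑ j, nextQ n q a s i j : ℕ) : ℝ≥0∞) ^ 2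
                + ((∑ j, nextQ n q a s i j : ℕ) : ℝ≥0∞))
              + (2 * ((∑ j, q i j : ℕ) : ℝ≥0∞) + ((∑ j, a i j : ℕ) : ℝ≥0∞)) := by ring
    have master := E3_mono Ab pol pd hpol2 _ _ ptw
    have eD : (∑' q : Fin n → Fin n → ℕ,
        pd q * (((∑ j, q i j : ℕ) : ℝ≥0∞) ^ 2 + ((∑ j, q i j : ℕ) : ℝ≥0∞)))
          = A2v + Bv := by
      refine (tsum_congr fun q => mul_add _ _ _).trans ?_
      rw [ENNReal.tsum_add, hA2v, hBv]
    have eL : E3 Ab pol pd (fun q a s =>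
        (((∑ j, nextQ n q a s i j : ℕ) : ℝ≥0∞) ^ 2 + ((∑ j, nextQ n q a s i j : ℕ) : ℝ≥0∞))
          + (2 * ((∑ j, q i j : ℕ) : ℝ≥0∞) + ((∑ j, a i j : ℕ) : ℝ≥0∞)))
        = (A2v + Bv) + (2 * Bv + Lm) := by
      calc E3 Ab pol pd (fun q a s =>
          (((∑ j, nextQ n q a s i j : ℕ) : ℝ≥0∞) ^ 2 + ((∑ j, nextQ n q a s i j : ℕ) : ℝ≥0∞))
            + (2 * ((∑ j, q i j : ℕ) : ℝ≥0∞) + ((∑ j, a i j : ℕ) : ℝ≥0∞)))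
          = E3 Ab pol pd (fun q a s =>
              (((∑ j, nextQ n q a s i j : ℕ) : ℝ≥0∞) ^ 2
                + ((∑ j, nextQ n q a s i j : ℕ) : ℝ≥0∞)))
            + E3 Ab pol pd (fun q a s =>
              2 * ((∑ j, q i j : ℕ) : ℝ≥0∞) + ((∑ j, a i j : ℕ) : ℝ≥0∞)) :=
            E3_add Ab pol pd _ _
        _ = (A2v + Bv) + (2 * Bv + Lm) := by
            congr 1
            · exact (E3_station Ab pol pd hpd
                (fun q => ((∑ j, q i j : ℕ) : ℝ≥0∞) ^ 2 + ((∑ j, q i j : ℕ) : ℝ≥0∞))).trans eD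
            · calc E3 Ab pol pd (fun q a s =>
                  2 * ((∑ j, q i j : ℕ) : ℝ≥0∞) + ((∑ j, a i j : ℕ) : ℝ≥0∞))
                  = E3 Ab pol pd (fun q _ _ => 2 * ((∑ j, q i j : ℕ) : ℝ≥0∞))
                    + E3 Ab pol pd (fun _ a _ => ((∑ j, a i j : ℕ) : ℝ≥0∞)) :=
                    E3_add Ab pol pd _ _
                _ = 2 * Bv + Lm := by
                    congr 1
                    · calc E3 Ab pol pd (fun q _ _ => 2 * ((∑ j, q i j : ℕ) : ℝ≥0∞))
                          = 2 * E3 Ab pol pd (fun q _ _ => ((∑ j, q i j : ℕ) : ℝ≥0∞)) :=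
                          E3_smul Ab pol pd 2 _
                        _ = 2 * Bv := by
                            rw [E3_q Ab pol pd hpol1 hA0
                              (fun q => ((∑ j, q i j : ℕ) : ℝ≥0∞)), hBv]
                    · rw [E3_a Ab pol pd hpol1 hpd1 (fun a => ((∑ j, a i j : ℕ) : ℝ≥0∞)), hM1]
    have eR : E3 Ab pol pd (fun q a s =>
        (((∑ j, q i j : ℕ) : ℝ≥0∞) ^ 2 + ((∑ j, q i j : ℕ) : ℝ≥0∞))
          + (2 * (((∑ j, q i j : ℕ) : ℝ≥0∞) * ((∑ j, a i j : ℕ) : ℝ≥0∞))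
              + ((∑ j, a i j : ℕ) : ℝ≥0∞) ^ 2))
        = (A2v + Bv) + (2 * (Bv * Lm) + (Lm + Cn)) := by
      calc E3 Ab pol pd (fun q a s =>
          (((∑ j, q i j : ℕ) : ℝ≥0∞) ^ 2 + ((∑ j, q i j : ℕ) : ℝ≥0∞))
            + (2 * (((∑ j, q i j : ℕ) : ℝ≥0∞) * ((∑ j, a i j : ℕ) : ℝ≥0∞))
                + ((∑ j, a i j : ℕ) : ℝ≥0∞) ^ 2))
          = E3 Ab pol pd (fun q _ _ =>
              ((∑ j, q i j : ℕ) : ℝ≥0∞) ^ 2 + ((∑ j, q i j : ℕ) : ℝ≥0∞))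
            + E3 Ab pol pd (fun q a _ =>
              2 * (((∑ j, q i j : ℕ) : ℝ≥0∞) * ((∑ j, a i j : ℕ) : ℝ≥0∞))
                + ((∑ j, a i j : ℕ) : ℝ≥0∞) ^ 2) :=
            E3_add Ab pol pd _ _
        _ = (A2v + Bv) + (2 * (Bv * Lm) + (Lm + Cn)) := by
            congr 1
            · exact (E3_q Ab pol pd hpol1 hA0
                (fun q => ((∑ j, q i j : ℕ) : ℝ≥0∞) ^ 2 + ((∑ j, q i j : ℕ) : ℝ≥0∞))).trans eD
            · calc E3 Ab pol pd (fun q a _ =>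
                  2 * (((∑ j, q i j : ℕ) : ℝ≥0∞) * ((∑ j, a i j : ℕ) : ℝ≥0∞))
                    + ((∑ j, a i j : ℕ) : ℝ≥0∞) ^ 2)
                  = E3 Ab pol pd (fun q a _ =>
                      2 * (((∑ j, q i j : ℕ) : ℝ≥0∞) * ((∑ j, a i j : ℕ) : ℝ≥0∞)))
                    + E3 Ab pol pd (fun _ a _ => ((∑ j, a i j : ℕ) : ℝ≥0∞) ^ 2) :=
                    E3_add Ab pol pd _ _
                _ = 2 * (Bv * Lm) + (Lm + Cn) := by
                    congr 1
                    · calc E3 Ab pol pd (fun q a _ =>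
                          2 * (((∑ j, q i j : ℕ) : ℝ≥0∞) * ((∑ j, a i j : ℕ) : ℝ≥0∞)))
                          = 2 * E3 Ab pol pd (fun q a _ =>
                              ((∑ j, q i j : ℕ) : ℝ≥0∞) * ((∑ j, a i j : ℕ) : ℝ≥0∞)) :=
                          E3_smul Ab pol pd 2 _
                        _ = 2 * (Bv * Lm) := by
                            rw [E3_prod Ab pol pd hpol1
                              (fun q => ((∑ j, q i j : ℕ) : ℝ≥0∞))
                              (fun a => ((∑ j, a i j : ℕ) : ℝ≥0∞)), hM1, hBv]
                    · rw [E3_a Ab pol pd hpol1 hpd1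
                        (fun a => ((∑ j, a i j : ℕ) : ℝ≥0∞) ^ 2), hM2]
    have hkey : (A2v + Bv) + (2 * (Bv * Lm) + (Lm + Cn)) ≤ (A2v + Bv) + (2 * Bv + Lm) := by
      rw [← eR, ← eL]; exact master
    have hfin1 : A2v + Bv ≠ ⊤ := ENNReal.add_ne_top.2 ⟨hA2fin, hBfin⟩
    have hkey2 : 2 * (Bv * Lm) + (Lm + Cn) ≤ 2 * Bv + Lm :=
      (ENNReal.add_le_add_iff_left hfin1).1 hkey
    have hkey3 : (2 * (Bv * Lm) + Cn) + Lm ≤ 2 * Bv + Lm := by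
      calc (2 * (Bv * Lm) + Cn) + Lm = 2 * (Bv * Lm) + (Lm + Cn) := by ring
        _ ≤ 2 * Bv + Lm := hkey2
    have hkey4 : 2 * (Bv * Lm) + Cn ≤ 2 * Bv :=
      (ENNReal.add_le_add_iff_right hLmne).1 hkey3
    have hsplit : 2 * Bv = 2 * (Bv * Lm) + 2 * (Bv * ENNReal.ofReal ε) := by
      have h1 : Lm + ENNReal.ofReal ε = 1 := by
        rw [hLmval, ← ENNReal.ofReal_add (by linarith) (le_of_lt hε0)]
        norm_num
      calc 2 * Bv = 2 * (Bv * (Lm + ENNReal.ofReal ε)) := by rw [h1, mul_one]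
        _ = 2 * (Bv * Lm) + 2 * (Bv * ENNReal.ofReal ε) := by ring
    have hkey5 : 2 * (Bv * Lm) + Cn ≤ 2 * (Bv * Lm) + 2 * (Bv * ENNReal.ofReal ε) := by
      rw [← hsplit]; exact hkey4
    have hBLne : 2 * (Bv * Lm) ≠ ⊤ :=
      ENNReal.mul_ne_top (by norm_num) (ENNReal.mul_ne_top hBfin hLmne)
    have hkey6 : Cn ≤ 2 * (Bv * ENNReal.ofReal ε) :=
      (ENNReal.add_le_add_iff_left hBLne).1 hkey5
    have hCnval : Cn = ENNReal.ofReal (((n * (n - 1) : ℕ) : ℝ) * p ^ 2) := by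
      rw [hCn, ENNReal.ofReal_mul (Nat.cast_nonneg _), ENNReal.ofReal_natCast,
        ENNReal.ofReal_pow hp0]
    have h2e : (2 : ℝ≥0∞) * ENNReal.ofReal ε = ENNReal.ofReal (2 * ε) := by
      rw [ENNReal.ofReal_mul (by norm_num : (0:ℝ) ≤ 2)]
      norm_num
    have hfin6 : ENNReal.ofReal (((n * (n - 1) : ℕ) : ℝ) * p ^ 2)
        ≤ ENNReal.ofReal (2 * ε) * Bv := by
      calc ENNReal.ofReal (((n * (n - 1) : ℕ) : ℝ) * p ^ 2) = Cn := hCnval.symm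
        _ ≤ 2 * (Bv * ENNReal.ofReal ε) := hkey6
        _ = ENNReal.ofReal (2 * ε) * Bv := by rw [← h2e]; ring
    have h2εpos : (0:ℝ) < 2 * ε := by linarith
    have hne0 : ENNReal.ofReal (2 * ε) ≠ 0 := by
      simp only [ne_eq, ENNReal.ofReal_eq_zero, not_le]
      linarith
    rw [← ENNReal.mul_le_mul_iff_right hne0 ENNReal.ofReal_ne_top, hBv]
    calc ENNReal.ofReal (2 * ε)
          * ENNReal.ofReal (((n * (n - 1) : ℕ) : ℝ) * p ^ 2 / (2 * ε))
        = ENNReal.ofReal (2 * ε * (((n * (n - 1) : ℕ) : ℝ) * p ^ 2 / (2 * ε))) :=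
          (ENNReal.ofReal_mul h2εpos.le).symm
      _ = ENNReal.ofReal (((n * (n - 1) : ℕ) : ℝ) * p ^ 2) := by
          rw [mul_comm (2 * ε), div_mul_cancel₀ _ (ne_of_gt h2εpos)]
      _ ≤ ENNReal.ofReal (2 * ε) * Bv := hfin6
  have hEtot : Etot n pd
      = ∑ i : Fin n, ∑' q : Fin n → Fin n → ℕ, pd q * ((∑ j, q i j : ℕ) : ℝ≥0∞) := by
    unfold Etot
    calc ∑' q : Fin n → Fin n → ℕ, pd q * (∑ i, ∑ j, (q i j : ℝ≥0∞))
        = ∑' q : Fin n → Fin n → ℕ, ∑ i, pd q * ((∑ j, q i j : ℕ) : ℝ≥0∞) :=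
          tsum_congr fun q => by
            rw [Finset.mul_sum]
            exact Finset.sum_congr rfl fun i _ => by rw [Nat.cast_sum]
      _ = ∑ i : Fin n, ∑' q : Fin n → Fin n → ℕ, pd q * ((∑ j, q i j : ℕ) : ℝ≥0∞) :=
          Summable.tsum_finsetSum fun i _ => ENNReal.summable
  calc ENNReal.ofReal ((1 - ε) ^ 2 * ((n : ℝ) - 1) / (2 * ε))
      = ENNReal.ofReal ((n : ℝ) * (((n * (n - 1) : ℕ) : ℝ) * p ^ 2 / (2 * ε))) := by
        congr 1
        have hc : ((n * (n - 1) : ℕ) : ℝ) = (n : ℝ) * ((n : ℝ) - 1) := by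
          rw [Nat.cast_mul, Nat.cast_sub hn]
          norm_num
        rw [hc, hpdef]
        have hne : (n : ℝ) ≠ 0 := by linarith
        field_simp
    _ = (n : ℝ≥0∞) * ENNReal.ofReal (((n * (n - 1) : ℕ) : ℝ) * p ^ 2 / (2 * ε)) := by
        rw [ENNReal.ofReal_mul (Nat.cast_nonneg n), ENNReal.ofReal_natCast]
    _ = ∑ _i : Fin n, ENNReal.ofReal (((n * (n - 1) : ℕ) : ℝ) * p ^ 2 / (2 * ε)) := by
        rw [Finset.sum_const, Finset.card_univ, Fintype.card_fin, nsmul_eq_mul]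
    _ ≤ ∑ i : Fin n, ∑' q : Fin n → Fin n → ℕ, pd q * ((∑ j, q i j : ℕ) : ℝ≥0∞) :=
        Finset.sum_le_sum fun i _ => row i
    _ = Etot n pd := hEtot.symm
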